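/- arXiv:2208.13095 — 2 statements merged into one kernel-verified Lean document; each statement's English description precedes it below -/
import Mathlib

section
/- Let Γ be a finite link-regular simple graph with maximal clique size d. With g_m(n) defined via the geodesic automaton of RACG(Γ) as the number of words of length n accepted from the m-clique states summed over ordered m-cliques (g₀(n) counting words accepted from the empty clique, g_{d+1} ≡ 0), let G_m(z) = Σ_{n≥0} g_m(n) zⁿ ∈ ℤ⟦z⟧. Set a₀ = 1, a_m = ℓ₀⋯ℓ_{m−1} for 1 ≤ m ≤ d, and b_{m,k} = binom(m,k) N_{m,k}. Define polynomials p₁(z) = q₁(z) = 1 and, for 1 ≤ m ≤ d, p_{m+1}(z) = p_m(z) − Σ_{k=0}^{m−1} b_{m,k} z^{m−k} p_{k+1}(z) and q_{m+1}(z) = q_m(z) + a_m z^m − Σ_{k=0}^{m−1} b_{m,k} z^{m−k} q_{k+1}(z). Then for every 1 ≤ m ≤ d + 1, z^m · G_m(z) = p_m(z) · G₀(z) − q_m(z) in ℤ⟦z⟧. -/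
variable {V : Type*}

/-- The link of a finite set of vertices `σ`: vertices `v ∉ σ` with `σ ∪ {v}` a clique. -/
noncomputable def lk [Fintype V] (G : SimpleGraph V) (σ : Finset V) : Finset V :=
  Set.Finite.toFinset (Set.toFinite {v : V | v ∉ σ ∧ G.IsClique (insert v (σ : Set V))})

/-- Link-regularity of a simple graph: cliques of the same size have links of the same size. -/
def LinkRegularS [Fintype V] (G : SimpleGraph V) : Prop :=
  ∀ σ₁ σ₂ : Finset V, G.IsClique (σ₁ : Set V) → G.IsClique (σ₂ : Set V) →
    σ₁.card = σ₂.card → (lk G σ₁).card = (lk G σ₂).card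

/-- The numbers `N_{m,k}` of the paper, in terms of the link sizes `ℓ`. -/
def Nmk (ℓ : ℕ → ℤ) (m k : ℕ) : ℤ :=
  if k = m then 1
  else if k + 1 = m then ℓ (m - 1) - ℓ m - 1
  else (∏ j ∈ Finset.Ioo k m, ℓ j) *
    ∑ j ∈ Finset.Icc k m, ((m - k).choose (j - k) : ℤ) * (-1) ^ (j - k) * ℓ j

/-- The transition function of the geodesic automaton of a RACG: states are finite sets of
vertices (the reachable ones are the cliques), `none` is the reject state. -/
def racgStep (G : SimpleGraph V) [DecidableEq V] [DecidableRel G.Adj] [Fintype V]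
    (σ : Finset V) (v : V) : Option (Finset V) :=
  if v ∈ σ then none else some (insert v (G.neighborFinset v ∩ σ))

def racgRun (G : SimpleGraph V) [DecidableEq V] [DecidableRel G.Adj] [Fintype V] :
    Finset V → List V → Option (Finset V)
  | σ, [] => some σ
  | σ, v :: w =>
    match racgStep G σ v with
    | none => none
    | some τ => racgRun G τ w

/-- `|L_σ ∩ (VΓ)ⁿ|`: the number of words of length `n` accepted by the geodesic automaton
of `RACG(Γ)` started in state `σ`. -/
noncomputable def aCount (G : SimpleGraph V) [Fintype V] [DecidableEq V] [DecidableRel G.Adj]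
    (σ : Finset V) (n : ℕ) : ℕ :=
  Set.ncard {w : List V | w.length = n ∧ ∃ τ, racgRun G σ w = some τ ∧ G.IsClique (τ : Set V)}

/-- The ordered `m`-cliques of `G`, as injective tuples with clique range. -/
noncomputable def orderedCliques [Fintype V] (G : SimpleGraph V) (m : ℕ) :
    Finset (Fin m → V) :=
  Set.Finite.toFinset (Set.toFinite
    {t : Fin m → V | Function.Injective t ∧ G.IsClique (Set.range t)})

/-- `g_m(n)`: for `m = 0` the number of accepted words of length `n` from the empty clique;
for `m ≥ 1` the sum over ordered `m`-cliques of the number of accepted words of length `n`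
starting at the corresponding state.  (For `m` larger than the maximal clique size there are
no ordered `m`-cliques, so the value is `0`.) -/
noncomputable def gfun (G : SimpleGraph V) [Fintype V] [DecidableEq V] [DecidableRel G.Adj]
    (m n : ℕ) : ℤ :=
  if m = 0 then (aCount G ∅ n : ℤ)
  else ∑ t ∈ orderedCliques G m, (aCount G (Finset.image t Finset.univ) n : ℤ)


set_option linter.unusedSectionVars false
section Aux
variable {V : Type*} [Fintype V] [DecidableEq V] (G : SimpleGraph V) [DecidableRel G.Adj]

open Finset

lemma mem_lk {σ : Finset V} {v : V} :
    v ∈ lk G σ ↔ v ∉ σ ∧ G.IsClique (insert v (σ : Set V)) := by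
  simp [lk]

lemma mem_orderedCliques {m : ℕ} {t : Fin m → V} :
    t ∈ orderedCliques G m ↔ Function.Injective t ∧ G.IsClique (Set.range t) := by
  simp [orderedCliques]

lemma coe_image_univ {m : ℕ} (t : Fin m → V) :
    ((Finset.image t Finset.univ : Finset V) : Set V) = Set.range t := by
  simp

lemma aCount_fin (σ : Finset V) (n : ℕ) :
    {w : List V | w.length = n ∧ ∃ τ, racgRun G σ w = some τ ∧ G.IsClique ((τ : Finset V) : Set V)}.Finite :=
  (List.finite_length_eq V n).subset fun _ hw => hw.1

lemma aCount_zero {σ : Finset V} (h : G.IsClique (σ : Set V)) : aCount G σ 0 = 1 := by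
  have hs : {w : List V | w.length = 0 ∧ ∃ τ, racgRun G σ w = some τ ∧ G.IsClique ((τ : Finset V) : Set V)} = {[]} := by
    ext w
    simp only [Set.mem_setOf_eq, Set.mem_singleton_iff, List.length_eq_zero_iff]
    constructor
    · rintro ⟨rfl, -⟩; rfl
    · rintro rfl
      exact ⟨rfl, σ, rfl, h⟩
  rw [aCount, hs, Set.ncard_singleton]

lemma aCount_succ (σ : Finset V) (n : ℕ) :
    aCount G σ (n + 1) = ∑ v ∈ σᶜ, aCount G (insert v (G.neighborFinset v ∩ σ)) n := by
  classical
  have key : (aCount_fin G σ (n+1)).toFinset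
      = σᶜ.biUnion (fun v => ((aCount_fin G (insert v (G.neighborFinset v ∩ σ)) n).toFinset).image (List.cons v)) := by
    ext w
    simp only [Set.Finite.mem_toFinset, Set.mem_setOf_eq, mem_biUnion, mem_image, mem_compl]
    constructor
    · rintro ⟨hlen, τ, hrun, hcl⟩
      cases w with
      | nil => simp at hlen
      | cons v w' =>
        by_cases hv : v ∈ σ
        · rw [racgRun] at hrun
          simp [racgStep, hv] at hrun
        · refine ⟨v, hv, w', ⟨by simpa using hlen, τ, ?_, hcl⟩, rfl⟩
          rw [racgRun] at hrun
          simpa [racgStep, hv] using hrun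
    · rintro ⟨v, hv, w', ⟨hlen, τ, hrun, hcl⟩, rfl⟩
      refine ⟨by simpa using hlen, τ, ?_, hcl⟩
      rw [racgRun]
      simp [racgStep, hv]
      exact hrun
  have h1 : aCount G σ (n+1) = ((aCount_fin G σ (n+1)).toFinset).card :=
    Set.ncard_eq_toFinset_card _ _
  rw [h1, key, Finset.card_biUnion]
  · refine Finset.sum_congr rfl fun v _ => ?_
    rw [Finset.card_image_of_injective _ (List.cons_injective), aCount,
      Set.ncard_eq_toFinset_card _ (aCount_fin G _ n)]
  · intro x _ y _ hxy
    simp only [Finset.disjoint_left, mem_image]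
    rintro w ⟨w1, _, rfl⟩ ⟨w2, _, h⟩
    injection h with h1 h2
    exact hxy h1.symm


lemma step_clique {σ : Finset V} {v : V} (h : G.IsClique (σ : Set V)) (hv : v ∉ σ) :
    G.IsClique ((insert v (G.neighborFinset v ∩ σ) : Finset V) : Set V) := by
  rw [Finset.coe_insert, SimpleGraph.isClique_insert]
  constructor
  · exact h.subset (by simp)
  · intro b hb _
    simp only [Finset.coe_inter, Set.mem_inter_iff, Finset.mem_coe,
      SimpleGraph.mem_neighborFinset] at hb
    exact hb.1

lemma step_card {σ : Finset V} {v : V} (hv : v ∉ σ) :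
    (insert v (G.neighborFinset v ∩ σ)).card = (G.neighborFinset v ∩ σ).card + 1 := by
  rw [Finset.card_insert_of_notMem]
  intro hmem
  exact hv (Finset.mem_of_mem_inter_right hmem)

lemma mem_lk_iff {σ : Finset V} (h : G.IsClique (σ : Set V)) {v : V} :
    v ∈ lk G σ ↔ v ∉ σ ∧ σ ⊆ G.neighborFinset v := by
  rw [mem_lk]
  constructor
  · rintro ⟨hv, hcl⟩
    refine ⟨hv, fun u hu => ?_⟩
    rw [SimpleGraph.mem_neighborFinset]
    rw [SimpleGraph.isClique_insert] at hcl
    exact hcl.2 u hu (fun e => hv (e ▸ hu))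
  · rintro ⟨hv, hsub⟩
    refine ⟨hv, ?_⟩
    rw [SimpleGraph.isClique_insert]
    exact ⟨h, fun b hb _ => by simpa [SimpleGraph.mem_neighborFinset] using hsub hb⟩

lemma card_atleast {σ ρ : Finset V} (hσ : G.IsClique (σ : Set V)) (hρ : ρ ⊆ σ) :
    ((σᶜ.filter fun v => ρ ⊆ G.neighborFinset v).card : ℤ)
      = ((lk G ρ).card : ℤ) - ((σ.card - ρ.card : ℕ) : ℤ) := by
  have hclρ : G.IsClique (ρ : Set V) := hσ.subset (by exact_mod_cast hρ)
  have hunion : lk G ρ = (σᶜ.filter fun v => ρ ⊆ G.neighborFinset v) ∪ (σ \ ρ) := by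
    ext v
    rw [mem_lk_iff G hclρ]
    simp only [Finset.mem_union, Finset.mem_filter, Finset.mem_compl, Finset.mem_sdiff]
    constructor
    · rintro ⟨hvρ, hsub⟩
      by_cases hv : v ∈ σ
      · exact Or.inr ⟨hv, hvρ⟩
      · exact Or.inl ⟨hv, hsub⟩
    · rintro (⟨hv, hsub⟩ | ⟨hv, hvρ⟩)
      · exact ⟨fun hmem => hv (hρ hmem), hsub⟩
      · refine ⟨hvρ, fun u hu => ?_⟩
        rw [SimpleGraph.mem_neighborFinset]
        exact hσ (hρ hu) hv (fun e => hvρ (e ▸ hu)) |>.symm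
  have hdisj : Disjoint (σᶜ.filter fun v => ρ ⊆ G.neighborFinset v) (σ \ ρ) := by
    rw [Finset.disjoint_left]
    intro x hx hx'
    exact (Finset.mem_compl.1 (Finset.mem_filter.1 hx).1) (Finset.mem_sdiff.1 hx').1
  rw [hunion, Finset.card_union_of_disjoint hdisj, Finset.card_sdiff_of_subset hρ]
  push_cast [Nat.cast_sub (Finset.card_le_card hρ)]
  ring
lemma lk_empty : lk G (∅ : Finset V) = Finset.univ := by
  ext v
  rw [mem_lk]
  simp [SimpleGraph.isClique_singleton]

lemma lk_card_eq {d : ℕ} (ℓ : ℕ → ℤ)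
    (hℓ0 : ℓ 0 = Fintype.card V)
    (hℓ : ∀ k, 1 ≤ k → k ≤ d → ∀ σ : Finset V, G.IsClique (σ : Set V) → σ.card = k →
      ℓ k = ((lk G σ).card : ℤ))
    {σ : Finset V} (h : G.IsClique (σ : Set V)) (hd : σ.card ≤ d) :
    ((lk G σ).card : ℤ) = ℓ σ.card := by
  rcases Nat.eq_zero_or_pos σ.card with h0 | h1
  · rw [Finset.card_eq_zero] at h0
    subst h0
    simp [lk_empty, hℓ0]
  · exact (hℓ σ.card h1 hd σ h rfl).symm

/-- restrict an integer sum over `range (n+1)` whose first `k` terms vanish,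
and shift the index. -/
lemma sum_shift (n k : ℕ) (hk : k ≤ n) (F : ℕ → ℤ) (h0 : ∀ j, j < k → F j = 0) :
    ∑ j ∈ Finset.range (n+1), F j = ∑ i ∈ Finset.range (n-k+1), F (k+i) := by
  have h1 : ∑ j ∈ Finset.range (n+1), F j = ∑ j ∈ Finset.Ico k (n+1), F j := by
    refine (Finset.sum_subset ?_ ?_).symm
    · intro x hx
      rw [Finset.mem_Ico] at hx
      exact Finset.mem_range.2 hx.2
    · intro x hx hx'
      rw [Finset.mem_range] at hx
      rw [Finset.mem_Ico] at hx'
      exact h0 x (by omega)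
  rw [h1, Finset.sum_Ico_eq_sum_range]
  have he : n + 1 - k = n - k + 1 := by omega
  rw [he]

lemma sub_mul_choose (r i : ℕ) : r.choose i * (r - i) = r * (r-1).choose i := by
  cases r with
  | zero =>
    cases i <;> simp
  | succ s =>
    have h1 := Nat.choose_succ_right_eq (s+1) i
    have h2 := Nat.add_one_mul_choose_eq s i
    simp only [Nat.add_sub_cancel]
    calc (s+1).choose i * (s+1-i) = (s+1).choose (i+1) * (i+1) := h1.symm
      _ = (s+1) * s.choose i := h2.symm

lemma binom_sum3 (ℓ : ℕ → ℤ) (n k : ℕ) (hk : k ≤ n) :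
    ∑ j ∈ Finset.range (n+1), (n.choose j : ℤ) * ((-1)^(j-k) * (j.choose k : ℤ) * ℓ j)
      = (n.choose k : ℤ) * ∑ i ∈ Finset.range (n-k+1), (-1)^i * ((n-k).choose i : ℤ) * ℓ (k+i) := by
  rw [sum_shift n k hk _ (fun j hj => by rw [Nat.choose_eq_zero_of_lt hj]; push_cast; ring)]
  rw [Finset.mul_sum]
  refine Finset.sum_congr rfl fun i hi => ?_
  rw [Finset.mem_range] at hi
  have htri : n.choose (k+i) * (k+i).choose k = n.choose k * (n-k).choose i := by
    have := Nat.choose_mul (n := n) (show k ≤ k + i by omega)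
    simpa using this
  have hik : k + i - k = i := by omega
  rw [hik]
  have : (n.choose (k+i) : ℤ) * ((k+i).choose k : ℤ) = (n.choose k : ℤ) * ((n-k).choose i : ℤ) := by
    exact_mod_cast congrArg (Nat.cast : ℕ → ℤ) htri
  linear_combination ((-1:ℤ)^i * ℓ (k+i)) * this

lemma binom_sum (n k : ℕ) :
    ∑ j ∈ Finset.range (n+1), (n.choose j : ℤ) * ((-1)^(j-k) * (j.choose k : ℤ))
      = if n = k then 1 else 0 := by
  rcases lt_or_ge n k with h | h
  · rw [if_neg (by omega)]
    refine Finset.sum_eq_zero fun j hj => ?_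
    rw [Finset.mem_range] at hj
    rw [Nat.choose_eq_zero_of_lt (show j < k by omega)]
    push_cast; ring
  · have h3 := binom_sum3 (fun _ => 1) n k h
    simp only [mul_one] at h3
    rw [h3]
    have : ∑ i ∈ Finset.range (n-k+1), (-1:ℤ)^i * ((n-k).choose i : ℤ)
        = if n - k = 0 then 1 else 0 := Int.alternating_sum_range_choose
    rw [this]
    rcases eq_or_ne n k with rfl | hne
    · simp
    · rw [if_neg (by omega), if_neg hne, mul_zero]

lemma binom_sum2 (n k : ℕ) :
    ∑ j ∈ Finset.range (n+1), (n.choose j : ℤ) * ((-1)^(j-k) * (j.choose k : ℤ) * ((n - j : ℕ) : ℤ))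
      = if k + 1 = n then (n:ℤ) else 0 := by
  rcases lt_or_ge n k with h | h
  · rw [if_neg (by omega)]
    refine Finset.sum_eq_zero fun j hj => ?_
    rw [Finset.mem_range] at hj
    rw [Nat.choose_eq_zero_of_lt (show j < k by omega)]
    push_cast; ring
  · rcases eq_or_ne n k with rfl | hne
    · rw [if_neg (by omega)]
      refine Finset.sum_eq_zero fun j hj => ?_
      rw [Finset.mem_range] at hj
      rcases lt_or_ge j n with hj2 | hj2
      · rw [Nat.choose_eq_zero_of_lt (show j < n by omega)]
        push_cast; ring
      · have : j = n := by omega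
        subst this
        simp
    · -- k < n, set r = n - k ≥ 1
      have h3 := binom_sum3 (fun j => ((n - j : ℕ) : ℤ)) n k h
      rw [h3]
      set r := n - k with hr
      have hr1 : 1 ≤ r := by omega
      have key : ∑ i ∈ Finset.range (r+1), (-1:ℤ)^i * (r.choose i : ℤ) * ((n - (k+i) : ℕ) : ℤ)
          = (r:ℤ) * (if r - 1 = 0 then 1 else 0) := by
        have step : ∀ i ∈ Finset.range (r+1),
            (-1:ℤ)^i * (r.choose i : ℤ) * ((n - (k+i) : ℕ) : ℤ)
              = (r:ℤ) * ((-1)^i * ((r-1).choose i : ℤ)) := by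
          intro i hi
          have hni : (n - (k+i) : ℕ) = r - i := by omega
          rw [hni]
          have := sub_mul_choose r i
          have hcast : (r.choose i : ℤ) * ((r - i : ℕ) : ℤ) = (r:ℤ) * ((r-1).choose i : ℤ) := by
            exact_mod_cast congrArg (Nat.cast : ℕ → ℤ) this
          linear_combination ((-1:ℤ)^i) * hcast
        rw [Finset.sum_congr rfl step, ← Finset.mul_sum]
        congr 1
        have hsplit : ∑ i ∈ Finset.range (r+1), (-1:ℤ)^i * ((r-1).choose i : ℤ)
            = ∑ i ∈ Finset.range r, (-1:ℤ)^i * ((r-1).choose i : ℤ) := by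
          rw [Finset.sum_range_succ, Nat.choose_eq_zero_of_lt (by omega)]
          simp
        rw [hsplit]
        have : r = (r-1) + 1 := by omega
        rw [this]
        simpa using (Int.alternating_sum_range_choose (n := r-1))
      rw [key]
      rcases eq_or_ne (k+1) n with he | he
      · rw [if_pos he, if_pos (by omega)]
        have : r = 1 := by omega
        rw [this]
        have : n.choose k = n := by
          rw [← he]
          exact Nat.choose_succ_self_right k
        rw [this]
        ring
      · rw [if_neg (by omega), if_neg he]
        ring
/-- Closed form for the number of vertices outside an `m`-clique whose neighbourhood meets
the clique in exactly `k` vertices. -/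
def EzS (ℓ : ℕ → ℤ) (m k : ℕ) : ℤ :=
  (m.choose k : ℤ) * (∑ i ∈ Finset.range (m - k + 1), (-1:ℤ)^i * ((m-k).choose i : ℤ) * ℓ (k+i))
    - (if k + 1 = m then (m:ℤ) else 0)

lemma indicator_card_eq (B : Finset V) (k : ℕ) :
    (∑ ρ ∈ B.powerset, (-1:ℤ)^(ρ.card - k) * (ρ.card.choose k : ℤ))
      = if B.card = k then 1 else 0 := by
  rw [Finset.sum_powerset_apply_card (fun j => (-1:ℤ)^(j-k) * (j.choose k : ℤ))]
  simp only [nsmul_eq_mul]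
  exact binom_sum B.card k

lemma E_card {d : ℕ} (ℓ : ℕ → ℤ)
    (hℓ0 : ℓ 0 = Fintype.card V)
    (hℓ : ∀ k, 1 ≤ k → k ≤ d → ∀ σ : Finset V, G.IsClique (σ : Set V) → σ.card = k →
      ℓ k = ((lk G σ).card : ℤ))
    {σ : Finset V} (hσ : G.IsClique (σ : Set V)) (hd : σ.card ≤ d) (k : ℕ) :
    ((σᶜ.filter fun v => (G.neighborFinset v ∩ σ).card = k).card : ℤ) = EzS ℓ σ.card k := by
  set m := σ.card with hm
  by_cases hk : k ≤ m
  case neg =>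
    -- filter is empty, and EzS is 0
    have h1 : (σᶜ.filter fun v => (G.neighborFinset v ∩ σ).card = k) = ∅ := by
      refine Finset.filter_eq_empty_iff.2 fun v _ => ?_
      have : (G.neighborFinset v ∩ σ).card ≤ σ.card := Finset.card_le_card Finset.inter_subset_right
      omega
    rw [h1]
    rw [EzS, Nat.choose_eq_zero_of_lt (by omega), if_neg (by omega)]
    simp
  case pos =>
  -- step 1: card as a sum of indicators
  have step1 : ((σᶜ.filter fun v => (G.neighborFinset v ∩ σ).card = k).card : ℤ)
      = ∑ v ∈ σᶜ, (if (G.neighborFinset v ∩ σ).card = k then (1:ℤ) else 0) := by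
    rw [Finset.card_filter]
    push_cast
    refine Finset.sum_congr rfl fun v _ => by split_ifs <;> simp
  rw [step1]
  -- step 2: indicator via inclusion-exclusion over subsets
  have step2 : ∀ v ∈ σᶜ, (if (G.neighborFinset v ∩ σ).card = k then (1:ℤ) else 0)
      = ∑ ρ ∈ σ.powerset, (if ρ ⊆ G.neighborFinset v then
          (-1:ℤ)^(ρ.card - k) * (ρ.card.choose k : ℤ) else 0) := by
    intro v _
    rw [← indicator_card_eq (G.neighborFinset v ∩ σ) k]
    rw [Finset.sum_ite, Finset.sum_const_zero, add_zero]
    refine (Finset.sum_congr ?_ fun _ _ => rfl)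
    ext ρ
    simp only [Finset.mem_filter, Finset.mem_powerset, Finset.subset_inter_iff]
    tauto
  rw [Finset.sum_congr rfl step2, Finset.sum_comm]
  -- step 3: inner sums are counts of common neighbours
  have step3 : ∀ ρ ∈ σ.powerset,
      (∑ v ∈ σᶜ, if ρ ⊆ G.neighborFinset v then
          (-1:ℤ)^(ρ.card - k) * (ρ.card.choose k : ℤ) else 0)
      = (-1:ℤ)^(ρ.card - k) * (ρ.card.choose k : ℤ) * (ℓ ρ.card - ((m - ρ.card : ℕ) : ℤ)) := by
    intro ρ hρ
    rw [Finset.mem_powerset] at hρ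
    have hcount : ((σᶜ.filter fun v => ρ ⊆ G.neighborFinset v).card : ℤ)
        = ℓ ρ.card - ((m - ρ.card : ℕ) : ℤ) := by
      rw [card_atleast G hσ hρ, lk_card_eq G ℓ hℓ0 hℓ (hσ.subset (by exact_mod_cast hρ))
        (le_trans (Finset.card_le_card hρ) hd)]
    rw [← hcount, Finset.sum_ite, Finset.sum_const_zero, add_zero, Finset.sum_const,
      nsmul_eq_mul]
    ring
  rw [Finset.sum_congr rfl step3]
  -- step 4: group by cardinality
  rw [Finset.sum_powerset_apply_card
    (fun j => (-1:ℤ)^(j - k) * (j.choose k : ℤ) * (ℓ j - ((m - j : ℕ) : ℤ)))]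
  simp only [nsmul_eq_mul, ← hm]
  -- step 5: split and evaluate
  have split : ∑ j ∈ Finset.range (m+1),
      (m.choose j : ℤ) * ((-1:ℤ)^(j - k) * (j.choose k : ℤ) * (ℓ j - ((m - j : ℕ) : ℤ)))
      = (∑ j ∈ Finset.range (m+1), (m.choose j : ℤ) * ((-1:ℤ)^(j - k) * (j.choose k : ℤ) * ℓ j))
        - ∑ j ∈ Finset.range (m+1),
            (m.choose j : ℤ) * ((-1:ℤ)^(j - k) * (j.choose k : ℤ) * ((m - j : ℕ) : ℤ)) := by
    rw [← Finset.sum_sub_distrib]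
    exact Finset.sum_congr rfl fun j _ => by ring
  rw [split, binom_sum3 ℓ m k hk, binom_sum2 m k, EzS]
lemma pair_sum {α β : Type*} (s : Finset α) (t : Finset β) (f : α → ℕ) (g : β → ℕ)
    (hcard : s.card = t.card) (hval : ∀ x ∈ s, ∀ y ∈ t, f x = g y) :
    ∑ x ∈ s, f x = ∑ y ∈ t, g y := by
  rcases s.eq_empty_or_nonempty with rfl | ⟨x₀, hx₀⟩
  · have : t = ∅ := Finset.card_eq_zero.1 (by simpa using hcard.symm)
    simp [this]
  · have ht : t.Nonempty := Finset.card_pos.1 (by rw [← hcard]; exact Finset.card_pos.2 ⟨x₀, hx₀⟩)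
    obtain ⟨y₀, hy₀⟩ := ht
    calc ∑ x ∈ s, f x = ∑ _x ∈ s, g y₀ := Finset.sum_congr rfl fun x hx => hval x hx y₀ hy₀
      _ = s.card * g y₀ := by rw [Finset.sum_const, smul_eq_mul]
      _ = t.card * g y₀ := by rw [hcard]
      _ = ∑ _y ∈ t, g y₀ := by rw [Finset.sum_const, smul_eq_mul]
      _ = ∑ y ∈ t, g y := Finset.sum_congr rfl fun y hy => by rw [← hval x₀ hx₀ y₀ hy₀, hval x₀ hx₀ y hy]

lemma sameCount {d : ℕ} (ℓ : ℕ → ℤ)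
    (hmax : ∀ σ : Finset V, G.IsClique (σ : Set V) → σ.card ≤ d)
    (hℓ0 : ℓ 0 = Fintype.card V)
    (hℓ : ∀ k, 1 ≤ k → k ≤ d → ∀ σ : Finset V, G.IsClique (σ : Set V) → σ.card = k →
      ℓ k = ((lk G σ).card : ℤ)) :
    ∀ n (σ σ' : Finset V), G.IsClique (σ : Set V) → G.IsClique (σ' : Set V) →
      σ.card = σ'.card → aCount G σ n = aCount G σ' n := by
  intro n
  induction n with
  | zero =>
    intro σ σ' h h' _
    rw [aCount_zero G h, aCount_zero G h']
  | succ n ih =>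
    intro σ σ' h h' hcard
    rw [aCount_succ, aCount_succ]
    set m := σ.card with hm
    have hpart : ∀ τ : Finset V, G.IsClique (τ : Set V) → τ.card = m →
        ∑ v ∈ τᶜ, aCount G (insert v (G.neighborFinset v ∩ τ)) n
          = ∑ k ∈ Finset.range (m+1), ∑ v ∈ τᶜ.filter (fun v => (G.neighborFinset v ∩ τ).card = k),
              aCount G (insert v (G.neighborFinset v ∩ τ)) n := by
      intro τ hτ hτcard
      refine (Finset.sum_fiberwise_of_maps_to ?_ _).symm
      intro v _
      rw [Finset.mem_range]
      have : (G.neighborFinset v ∩ τ).card ≤ τ.card := Finset.card_le_card Finset.inter_subset_right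
      omega
    rw [hpart σ h rfl, hpart σ' h' hcard.symm]
    refine Finset.sum_congr rfl fun k _ => ?_
    refine pair_sum _ _ _ _ ?_ ?_
    · -- equal cardinalities via E_card
      have e1 := E_card G ℓ hℓ0 hℓ h (hmax σ h) k
      have e2 := E_card G ℓ hℓ0 hℓ h' (hmax σ' h') k
      rw [← hcard] at e2
      exact_mod_cast e1.trans e2.symm
    · intro x hx y hy
      rw [Finset.mem_filter, Finset.mem_compl] at hx hy
      refine ih _ _ (step_clique G h hx.1) (step_clique G h' hy.1) ?_
      rw [step_card G hx.1, step_card G hy.1, hx.2, hy.2]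
lemma image_card {m : ℕ} {t : Fin m → V} (ht : t ∈ orderedCliques G m) :
    (Finset.image t Finset.univ).card = m := by
  rw [Finset.card_image_of_injective _ ((mem_orderedCliques G).1 ht).1]
  simp

lemma image_clique {m : ℕ} {t : Fin m → V} (ht : t ∈ orderedCliques G m) :
    G.IsClique ((Finset.image t Finset.univ : Finset V) : Set V) := by
  rw [coe_image_univ]
  exact ((mem_orderedCliques G).1 ht).2

lemma OC_zero : (orderedCliques G 0).card = 1 := by
  rw [Finset.card_eq_one]
  refine ⟨fun i => i.elim0, ?_⟩
  ext t
  rw [mem_orderedCliques]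
  simp only [Finset.mem_singleton]
  constructor
  · intro _
    funext i
    exact i.elim0
  · intro _
    constructor
    · intro i
      exact i.elim0
    · rw [Set.range_eq_empty]
      exact SimpleGraph.isClique_empty

lemma tail_mem_OC {m : ℕ} {t : Fin (m+1) → V} (ht : t ∈ orderedCliques G (m+1)) :
    Fin.tail t ∈ orderedCliques G m := by
  rw [mem_orderedCliques] at ht ⊢
  constructor
  · intro i j hij
    exact Fin.succ_injective m (ht.1 hij)
  · refine ht.2.subset ?_
    rintro x ⟨i, rfl⟩
    exact ⟨i.succ, rfl⟩

lemma image_tail {m : ℕ} (t : Fin (m+1) → V) :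
    Finset.image t Finset.univ = insert (t 0) (Finset.image (Fin.tail t) Finset.univ) := by
  apply Finset.coe_injective
  rw [Finset.coe_insert, coe_image_univ, coe_image_univ]
  conv_lhs => rw [← Fin.cons_self_tail t]
  exact Fin.range_cons _ _

lemma OC_sum_succ (m : ℕ) (f : Finset V → ℤ) :
    ∑ t ∈ orderedCliques G (m+1), f (Finset.image t Finset.univ)
      = ∑ t ∈ orderedCliques G m, ∑ v ∈ lk G (Finset.image t Finset.univ),
          f (insert v (Finset.image t Finset.univ)) := by
  rw [← Finset.sum_fiberwise_of_maps_to (g := fun t' => Fin.tail t')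
      (fun t' ht' => tail_mem_OC G ht') (fun t' => f (Finset.image t' Finset.univ))]
  refine Finset.sum_congr rfl fun t ht => ?_
  refine Finset.sum_nbij' (fun t' => t' 0) (fun v => Fin.cons v t) ?_ ?_ ?_ ?_ ?_
  · -- forward membership
    intro t' ht'
    rw [Finset.mem_filter] at ht'
    obtain ⟨ht'OC, ht'tail⟩ := ht'
    rw [mem_lk]
    subst ht'tail
    constructor
    · intro hmem
      rw [Finset.mem_image] at hmem
      obtain ⟨i, _, hi⟩ := hmem
      have : i.succ = 0 := ((mem_orderedCliques G).1 ht'OC).1 hi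
      exact Fin.succ_ne_zero i this
    · show G.IsClique (insert (t' 0) ((Finset.image (Fin.tail t') Finset.univ : Finset V) : Set V))
      rw [coe_image_univ]
      have : insert (t' 0) (Set.range (Fin.tail t')) = Set.range t' := by
        conv_rhs => rw [← Fin.cons_self_tail t']
        exact (Fin.range_cons _ _).symm
      rw [this]
      exact ((mem_orderedCliques G).1 ht'OC).2
  · -- backward membership
    intro v hv
    rw [mem_lk] at hv
    rw [Finset.mem_filter]
    constructor
    · rw [mem_orderedCliques]
      constructor
      · apply Fin.cons_injective_of_injective
        · rw [← coe_image_univ]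
          intro hmem
          exact hv.1 (by exact_mod_cast hmem)
        · exact ((mem_orderedCliques G).1 ht).1
      · rw [Fin.range_cons, ← coe_image_univ]
        exact hv.2
    · exact Fin.tail_cons (α := fun _ => V) v t
  · intro t' ht'
    rw [Finset.mem_filter] at ht'
    rw [← ht'.2]
    exact Fin.cons_self_tail t'
  · intro v _
    exact Fin.cons_zero (α := fun _ => V) v t
  · intro t' ht'
    rw [Finset.mem_filter] at ht'
    rw [image_tail t', ht'.2]

lemma OC_card {d : ℕ} (ℓ : ℕ → ℤ)
    (hℓ0 : ℓ 0 = Fintype.card V)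
    (hℓ : ∀ k, 1 ≤ k → k ≤ d → ∀ σ : Finset V, G.IsClique (σ : Set V) → σ.card = k →
      ℓ k = ((lk G σ).card : ℤ)) :
    ∀ m, m ≤ d → ((orderedCliques G m).card : ℤ) = ∏ j ∈ Finset.range m, ℓ j := by
  intro m
  induction m with
  | zero => intro _; simp [OC_zero]
  | succ m ih =>
    intro hmd
    have h1 : ((orderedCliques G (m+1)).card : ℤ)
        = ∑ t ∈ orderedCliques G (m+1), (1:ℤ) := by simp
    rw [h1, OC_sum_succ G m (fun _ => 1)]
    have h2 : ∀ t ∈ orderedCliques G m,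
        (∑ _v ∈ lk G (Finset.image t Finset.univ), (1:ℤ)) = ℓ m := by
      intro t ht
      rw [Finset.sum_const, nsmul_eq_mul, mul_one]
      have := lk_card_eq G ℓ hℓ0 hℓ (image_clique G ht) (by rw [image_card G ht]; omega)
      rw [this, image_card G ht]
    rw [Finset.sum_congr rfl h2, Finset.sum_const, nsmul_eq_mul, ih (by omega),
      Finset.prod_range_succ]
lemma coeff_id (ℓ : ℕ → ℤ) (m k : ℕ) (hk : k < m) :
    (∏ j ∈ Finset.range m, ℓ j) * EzS ℓ m k
      = (m.choose k : ℤ) * Nmk ℓ m k * ∏ j ∈ Finset.range (k+1), ℓ j := by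
  rcases eq_or_ne (k+1) m with rfl | hne
  · rw [EzS, if_pos rfl, Nmk, if_neg (show ¬(k = k+1) by omega), if_pos rfl]
    have h1 : k + 1 - k = 1 := by omega
    rw [h1]
    have h2 : ((k+1).choose k : ℤ) = ((k:ℤ)+1) := by exact_mod_cast Nat.choose_succ_self_right k
    rw [h2]
    rw [Finset.sum_range_succ, Finset.sum_range_succ, Finset.sum_range_zero]
    simp only [Nat.choose_self, Nat.choose_zero_right, pow_zero, pow_one, Nat.add_sub_cancel,
      Nat.cast_one, zero_add, add_zero]
    push_cast
    ring
  · rw [EzS, if_neg hne, Nmk, if_neg (show k ≠ m by omega), if_neg hne]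
    have hdisj : Disjoint (Finset.range (k+1)) (Finset.Ioo k m) := by
      rw [Finset.disjoint_left]
      intro j hj hj'
      rw [Finset.mem_range] at hj
      rw [Finset.mem_Ioo] at hj'
      omega
    have hprod : ∏ j ∈ Finset.range m, ℓ j
        = (∏ j ∈ Finset.range (k+1), ℓ j) * ∏ j ∈ Finset.Ioo k m, ℓ j := by
      rw [← Finset.prod_union hdisj]
      apply Finset.prod_congr _ (fun _ _ => rfl)
      ext j
      simp only [Finset.mem_union, Finset.mem_range, Finset.mem_Ioo]
      omega
    have hsum : ∑ i ∈ Finset.range (m-k+1), (-1:ℤ)^i * ((m-k).choose i : ℤ) * ℓ (k+i)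
        = ∑ j ∈ Finset.Icc k m, ((m-k).choose (j-k) : ℤ) * (-1:ℤ)^(j-k) * ℓ j := by
      rw [← Finset.Ico_add_one_right_eq_Icc, Finset.sum_Ico_eq_sum_range]
      have he : m + 1 - k = m - k + 1 := by omega
      rw [he]
      refine Finset.sum_congr rfl fun i _ => ?_
      have hik : k + i - k = i := by omega
      rw [hik]; ring
    rw [hsum, hprod, sub_zero]
    ring

lemma g0_zero : gfun G 0 0 = 1 := by
  rw [gfun, if_pos rfl, aCount_zero G (by rw [Finset.coe_empty]; exact SimpleGraph.isClique_empty)]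
  norm_num

lemma g0_succ (n : ℕ) : gfun G 0 (n+1) = gfun G 1 n := by
  rw [gfun, if_pos rfl, gfun, if_neg one_ne_zero, aCount_succ]
  push_cast
  rw [Finset.compl_empty]
  refine Finset.sum_nbij' (fun v => (fun _ => v : Fin 1 → V)) (fun t => t 0) ?_ ?_ ?_ ?_ ?_
  · intro v _
    rw [mem_orderedCliques]
    refine ⟨fun a b _ => Subsingleton.elim a b, ?_⟩
    rw [Set.range_const]
    exact G.isClique_singleton v
  · intro t _
    exact Finset.mem_univ _
  · intro v _
    rfl
  · intro t _
    funext i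
    have : i = 0 := Subsingleton.elim i 0
    rw [this]
  · intro v _
    have h1 : Finset.image (fun _ => v : Fin 1 → V) Finset.univ = {v} :=
      Finset.image_const Finset.univ_nonempty v
    rw [h1]
    congr 2
    rw [Finset.inter_empty]
    rfl

lemma g_zero {d : ℕ} (ℓ : ℕ → ℤ)
    (hℓ0 : ℓ 0 = Fintype.card V)
    (hℓ : ∀ k, 1 ≤ k → k ≤ d → ∀ σ : Finset V, G.IsClique (σ : Set V) → σ.card = k →
      ℓ k = ((lk G σ).card : ℤ))
    (m : ℕ) (hm1 : 1 ≤ m) (hmd : m ≤ d) :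
    gfun G m 0 = ∏ j ∈ Finset.range m, ℓ j := by
  rw [gfun, if_neg (by omega)]
  have h1 : ∀ t ∈ orderedCliques G m,
      (aCount G (Finset.image t Finset.univ) 0 : ℤ) = 1 := by
    intro t ht
    rw [aCount_zero G (image_clique G ht)]
    norm_num
  rw [Finset.sum_congr rfl h1, Finset.sum_const, nsmul_eq_mul, mul_one,
    OC_card G ℓ hℓ0 hℓ m hmd]

lemma g_rec {d : ℕ} (ℓ : ℕ → ℤ)
    (hmax : ∀ σ : Finset V, G.IsClique (σ : Set V) → σ.card ≤ d)
    (hmax' : ∃ σ : Finset V, G.IsClique (σ : Set V) ∧ σ.card = d)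
    (hℓ0 : ℓ 0 = Fintype.card V)
    (hℓ : ∀ k, 1 ≤ k → k ≤ d → ∀ σ : Finset V, G.IsClique (σ : Set V) → σ.card = k →
      ℓ k = ((lk G σ).card : ℤ))
    (b : ℕ → ℕ → ℤ) (hb : ∀ m k, b m k = (m.choose k : ℤ) * Nmk ℓ m k)
    (m : ℕ) (hm1 : 1 ≤ m) (hmd : m ≤ d) (n : ℕ) :
    gfun G m (n+1) = gfun G (m+1) n + ∑ k ∈ Finset.range m, b m k * gfun G (k+1) n := by
  obtain ⟨σd, hσd, hσdcard⟩ := hmax'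
  rw [gfun, if_neg (by omega)]
  have e1 : ∀ t ∈ orderedCliques G m,
      (aCount G (Finset.image t Finset.univ) (n+1) : ℤ)
        = ∑ k ∈ Finset.range (m+1),
            ∑ v ∈ (Finset.image t Finset.univ)ᶜ.filter
                (fun v => (G.neighborFinset v ∩ Finset.image t Finset.univ).card = k),
              (aCount G (insert v (G.neighborFinset v ∩ Finset.image t Finset.univ)) n : ℤ) := by
    intro t ht
    rw [aCount_succ]
    push_cast
    refine (Finset.sum_fiberwise_of_maps_to ?_ _).symm
    intro v _
    rw [Finset.mem_range]
    have h1 : (G.neighborFinset v ∩ Finset.image t Finset.univ).card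
        ≤ (Finset.image t Finset.univ).card := Finset.card_le_card Finset.inter_subset_right
    rw [image_card G ht] at h1
    omega
  rw [Finset.sum_congr rfl e1, Finset.sum_comm, Finset.sum_range_succ]
  have hA : (∑ t ∈ orderedCliques G m,
      ∑ v ∈ (Finset.image t Finset.univ)ᶜ.filter
          (fun v => (G.neighborFinset v ∩ Finset.image t Finset.univ).card = m),
        (aCount G (insert v (G.neighborFinset v ∩ Finset.image t Finset.univ)) n : ℤ))
      = gfun G (m+1) n := by
    rw [gfun, if_neg (by omega), OC_sum_succ G m (fun τ => (aCount G τ n : ℤ))]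
    refine Finset.sum_congr rfl fun t ht => ?_
    have hFm : (Finset.image t Finset.univ)ᶜ.filter
        (fun v => (G.neighborFinset v ∩ Finset.image t Finset.univ).card = m)
        = lk G (Finset.image t Finset.univ) := by
      ext v
      rw [Finset.mem_filter, Finset.mem_compl, mem_lk_iff G (image_clique G ht)]
      constructor
      · rintro ⟨hv, hc⟩
        refine ⟨hv, ?_⟩
        refine Finset.inter_eq_right.1 ?_
        refine Finset.eq_of_subset_of_card_le Finset.inter_subset_right ?_
        rw [image_card G ht, hc]
      · rintro ⟨hv, hsub⟩
        refine ⟨hv, ?_⟩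
        rw [Finset.inter_eq_right.2 hsub, image_card G ht]
    refine Finset.sum_congr hFm fun v hv => ?_
    rw [mem_lk_iff G (image_clique G ht)] at hv
    rw [Finset.inter_eq_right.2 hv.2]
  have hB : ∀ k ∈ Finset.range m, (∑ t ∈ orderedCliques G m,
      ∑ v ∈ (Finset.image t Finset.univ)ᶜ.filter
          (fun v => (G.neighborFinset v ∩ Finset.image t Finset.univ).card = k),
        (aCount G (insert v (G.neighborFinset v ∩ Finset.image t Finset.univ)) n : ℤ))
      = b m k * gfun G (k+1) n := by
    intro k hkr
    rw [Finset.mem_range] at hkr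
    obtain ⟨τ₀, hτ₀sub, hτ₀card⟩ := Finset.exists_subset_card_eq
      (show k+1 ≤ σd.card by omega)
    have hτ₀cl : G.IsClique (τ₀ : Set V) := hσd.subset (by exact_mod_cast hτ₀sub)
    have hstep : ∀ t ∈ orderedCliques G m,
        (∑ v ∈ (Finset.image t Finset.univ)ᶜ.filter
            (fun v => (G.neighborFinset v ∩ Finset.image t Finset.univ).card = k),
          (aCount G (insert v (G.neighborFinset v ∩ Finset.image t Finset.univ)) n : ℤ))
          = EzS ℓ m k * (aCount G τ₀ n : ℤ) := by
      intro t ht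
      have hval : ∀ v ∈ (Finset.image t Finset.univ)ᶜ.filter
          (fun v => (G.neighborFinset v ∩ Finset.image t Finset.univ).card = k),
          (aCount G (insert v (G.neighborFinset v ∩ Finset.image t Finset.univ)) n : ℤ)
            = (aCount G τ₀ n : ℤ) := by
        intro v hv
        rw [Finset.mem_filter, Finset.mem_compl] at hv
        have hsc := sameCount G ℓ hmax hℓ0 hℓ n _ τ₀
          (step_clique G (image_clique G ht) hv.1) hτ₀cl
          (by rw [step_card G hv.1, hv.2, hτ₀card])
        exact_mod_cast hsc
      rw [Finset.sum_congr rfl hval, Finset.sum_const, nsmul_eq_mul]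
      have hE := E_card G ℓ hℓ0 hℓ (image_clique G ht)
        (by rw [image_card G ht]; exact hmd) k
      rw [image_card G ht] at hE
      rw [hE]
    rw [Finset.sum_congr rfl hstep, Finset.sum_const, nsmul_eq_mul]
    have hg : gfun G (k+1) n = ((orderedCliques G (k+1)).card : ℤ) * (aCount G τ₀ n : ℤ) := by
      rw [gfun, if_neg (by omega)]
      have h2 : ∀ s ∈ orderedCliques G (k+1),
          (aCount G (Finset.image s Finset.univ) n : ℤ) = (aCount G τ₀ n : ℤ) := by
        intro s hs
        have hsc := sameCount G ℓ hmax hℓ0 hℓ n _ τ₀ (image_clique G hs) hτ₀cl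
          (by rw [image_card G hs, hτ₀card])
        exact_mod_cast hsc
      rw [Finset.sum_congr rfl h2, Finset.sum_const, nsmul_eq_mul]
    rw [hg, hb]
    have hoc1 := OC_card G ℓ hℓ0 hℓ m hmd
    have hoc2 := OC_card G ℓ hℓ0 hℓ (k+1) (by omega)
    rw [hoc1, hoc2]
    have := coeff_id ℓ m k hkr
    linear_combination (aCount G τ₀ n : ℤ) * this
  rw [Finset.sum_congr rfl hB, hA]
  exact add_comm _ _
lemma PS_shift (f : ℕ → ℤ) :
    PowerSeries.mk f
      = PowerSeries.C (f 0) + PowerSeries.X * PowerSeries.mk (fun n => f (n+1)) := by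
  ext n
  cases n with
  | zero => simp
  | succ n =>
    rw [map_add, PowerSeries.coeff_succ_X_mul, PowerSeries.coeff_mk, PowerSeries.coeff_mk,
      PowerSeries.coeff_C, if_neg (Nat.succ_ne_zero n), zero_add]

lemma PS_mk_sum {ι : Type*} (s : Finset ι) (F : ι → ℕ → ℤ) :
    PowerSeries.mk (fun n => ∑ k ∈ s, F k n) = ∑ k ∈ s, PowerSeries.mk (F k) := by
  ext n
  rw [PowerSeries.coeff_mk, map_sum]
  exact Finset.sum_congr rfl fun k _ => (PowerSeries.coeff_mk n (F k)).symm

lemma PS_mk_add (f g : ℕ → ℤ) :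
    PowerSeries.mk (fun n => f n + g n) = PowerSeries.mk f + PowerSeries.mk g := by
  ext n
  simp

lemma PS_C_mul (a : ℤ) (f : ℕ → ℤ) :
    PowerSeries.C a * PowerSeries.mk f = PowerSeries.mk (fun n => a * f n) := by
  ext n
  rw [PowerSeries.coeff_C_mul, PowerSeries.coeff_mk, PowerSeries.coeff_mk]

lemma poly_coe_sum {ι : Type*} (s : Finset ι) (F : ι → Polynomial ℤ) :
    ((∑ k ∈ s, F k : Polynomial ℤ) : PowerSeries ℤ)
      = ∑ k ∈ s, ((F k : Polynomial ℤ) : PowerSeries ℤ) := by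
  rw [← Polynomial.coeToPowerSeries.ringHom_apply, map_sum]
  simp [Polynomial.coeToPowerSeries.ringHom_apply]

end Aux
theorem stmt15 [Fintype V] [DecidableEq V] (G : SimpleGraph V) [DecidableRel G.Adj]
    (d : ℕ) (hLR : LinkRegularS G)
    (hmax : ∀ σ : Finset V, G.IsClique (σ : Set V) → σ.card ≤ d)
    (hmax' : ∃ σ : Finset V, G.IsClique (σ : Set V) ∧ σ.card = d)
    (ℓ : ℕ → ℤ) (hℓ0 : ℓ 0 = Fintype.card V)
    (hℓ : ∀ k, 1 ≤ k → k ≤ d → ∀ σ : Finset V, G.IsClique (σ : Set V) → σ.card = k →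
      ℓ k = ((lk G σ).card : ℤ))
    (a : ℕ → ℤ) (ha0 : a 0 = 1)
    (ha : ∀ m, 1 ≤ m → m ≤ d → a m = ∏ j ∈ Finset.range m, ℓ j)
    (b : ℕ → ℕ → ℤ) (hb : ∀ m k, b m k = (m.choose k : ℤ) * Nmk ℓ m k)
    (p q : ℕ → Polynomial ℤ)
    (hp1 : p 1 = 1) (hq1 : q 1 = 1)
    (hp : ∀ m, 1 ≤ m → m ≤ d → p (m + 1) =
      p m - ∑ k ∈ Finset.range m, Polynomial.C (b m k) * Polynomial.X ^ (m - k) * p (k + 1))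
    (hq : ∀ m, 1 ≤ m → m ≤ d → q (m + 1) =
      q m + Polynomial.C (a m) * Polynomial.X ^ m
        - ∑ k ∈ Finset.range m, Polynomial.C (b m k) * Polynomial.X ^ (m - k) * q (k + 1)) :
    ∀ m, 1 ≤ m → m ≤ d + 1 →
      (PowerSeries.X : PowerSeries ℤ) ^ m * PowerSeries.mk (fun n => gfun G m n) =
        (p m : PowerSeries ℤ) * PowerSeries.mk (fun n => gfun G 0 n)
          - (q m : PowerSeries ℤ) := by
  intro m
  induction m using Nat.strong_induction_on with
  | _ m IH =>
    intro hm1 hmd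
    obtain ⟨m, rfl⟩ : ∃ m', m = m' + 1 := ⟨m - 1, by omega⟩
    rcases Nat.eq_zero_or_pos m with rfl | hm
    · -- base case m = 1
      rw [hp1, hq1, Polynomial.coe_one, one_mul]
      have key : PowerSeries.mk (fun n => gfun G 0 n)
          = 1 + PowerSeries.X * PowerSeries.mk (fun n => gfun G 1 n) := by
        rw [PS_shift (fun n => gfun G 0 n), g0_zero G]
        have h1 : (fun n => gfun G 0 (n+1)) = fun n => gfun G 1 n := funext (g0_succ G)
        rw [h1, map_one]
      rw [key, pow_one]
      ring
    · -- inductive step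
      have hm1' : 1 ≤ m := hm
      have hmd' : m ≤ d := by omega
      have e1 : PowerSeries.mk (fun n => gfun G m n)
          = PowerSeries.C (∏ j ∈ Finset.range m, ℓ j)
            + PowerSeries.X * (PowerSeries.mk (fun n => gfun G (m+1) n)
              + ∑ k ∈ Finset.range m,
                  PowerSeries.C (b m k) * PowerSeries.mk (fun n => gfun G (k+1) n)) := by
        rw [PS_shift (fun n => gfun G m n), g_zero G ℓ hℓ0 hℓ m hm1' hmd']
        congr 2
        have h2 : (fun n => gfun G m (n+1))
            = fun n => gfun G (m+1) n + ∑ k ∈ Finset.range m, b m k * gfun G (k+1) n :=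
          funext (g_rec G ℓ hmax hmax' hℓ0 hℓ b hb m hm1' hmd')
        rw [h2]
        have h3 : (fun n => gfun G (m+1) n + ∑ k ∈ Finset.range m, b m k * gfun G (k+1) n)
            = fun n => gfun G (m+1) n + (fun n => ∑ k ∈ Finset.range m, b m k * gfun G (k+1) n) n := rfl
        rw [h3, PS_mk_add]
        congr 1
        rw [PS_mk_sum (F := fun k n => b m k * gfun G (k+1) n)]
        exact Finset.sum_congr rfl fun k _ => (PS_C_mul _ _).symm
      have e2 : PowerSeries.X * PowerSeries.mk (fun n => gfun G (m+1) n)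
          = PowerSeries.mk (fun n => gfun G m n)
            - PowerSeries.C (∏ j ∈ Finset.range m, ℓ j)
            - PowerSeries.X * ∑ k ∈ Finset.range m,
                PowerSeries.C (b m k) * PowerSeries.mk (fun n => gfun G (k+1) n) := by
        rw [e1]; ring
      have IHm := IH m (by omega) hm1' (by omega)
      have IHk : ∀ k ∈ Finset.range m,
          (PowerSeries.X : PowerSeries ℤ)^(k+1) * PowerSeries.mk (fun n => gfun G (k+1) n)
            = (p (k+1) : PowerSeries ℤ) * PowerSeries.mk (fun n => gfun G 0 n)
              - (q (k+1) : PowerSeries ℤ) := by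
        intro k hk
        rw [Finset.mem_range] at hk
        exact IH (k+1) (by omega) (by omega) (by omega)
      have key : (PowerSeries.X : PowerSeries ℤ)^(m+1) * PowerSeries.mk (fun n => gfun G (m+1) n)
          = (PowerSeries.X^m * PowerSeries.mk (fun n => gfun G m n))
            - PowerSeries.C (∏ j ∈ Finset.range m, ℓ j) * PowerSeries.X^m
            - ∑ k ∈ Finset.range m,
                PowerSeries.C (b m k) * PowerSeries.X^(m-k)
                  * (PowerSeries.X^(k+1) * PowerSeries.mk (fun n => gfun G (k+1) n)) := by
        have hX : ∀ k ∈ Finset.range m,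
            PowerSeries.C (b m k) * PowerSeries.X^(m-k)
              * ((PowerSeries.X : PowerSeries ℤ)^(k+1) * PowerSeries.mk (fun n => gfun G (k+1) n))
            = PowerSeries.X^m * (PowerSeries.X
                * (PowerSeries.C (b m k) * PowerSeries.mk (fun n => gfun G (k+1) n))) := by
          intro k hk
          rw [Finset.mem_range] at hk
          have hpow : (PowerSeries.X : PowerSeries ℤ)^(m-k) * PowerSeries.X^(k+1)
              = PowerSeries.X^m * PowerSeries.X := by
            rw [← pow_add, ← pow_succ]
            congr 1
            omega
          calc PowerSeries.C (b m k) * PowerSeries.X^(m-k)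
              * ((PowerSeries.X : PowerSeries ℤ)^(k+1) * PowerSeries.mk (fun n => gfun G (k+1) n))
              = (PowerSeries.X^(m-k) * PowerSeries.X^(k+1))
                  * (PowerSeries.C (b m k) * PowerSeries.mk (fun n => gfun G (k+1) n)) := by ring
            _ = _ := by rw [hpow]; ring
        rw [Finset.sum_congr rfl hX, ← Finset.mul_sum, pow_succ, ← Finset.mul_sum]
        calc (PowerSeries.X : PowerSeries ℤ)^m * PowerSeries.X * PowerSeries.mk (fun n => gfun G (m+1) n)
            = PowerSeries.X^m * (PowerSeries.X * PowerSeries.mk (fun n => gfun G (m+1) n)) := by ring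
          _ = _ := by rw [e2]; ring
      -- rewrite the inductive hypotheses in `key`
      have hsum : ∑ k ∈ Finset.range m,
          PowerSeries.C (b m k) * PowerSeries.X^(m-k)
            * ((PowerSeries.X : PowerSeries ℤ)^(k+1) * PowerSeries.mk (fun n => gfun G (k+1) n))
          = (∑ k ∈ Finset.range m, PowerSeries.C (b m k) * PowerSeries.X^(m-k)
                * (p (k+1) : PowerSeries ℤ)) * PowerSeries.mk (fun n => gfun G 0 n)
            - ∑ k ∈ Finset.range m, PowerSeries.C (b m k) * PowerSeries.X^(m-k)
                * (q (k+1) : PowerSeries ℤ) := by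
        rw [Finset.sum_mul, ← Finset.sum_sub_distrib]
        refine Finset.sum_congr rfl fun k hk => ?_
        rw [IHk k hk]
        ring
      rw [key, hsum, IHm]
      rw [hp m hm1' hmd', hq m hm1' hmd', ha m hm1' hmd']
      rw [Polynomial.coe_sub, Polynomial.coe_sub, Polynomial.coe_add, poly_coe_sum, poly_coe_sum,
        Polynomial.coe_mul, Polynomial.coe_C, Polynomial.coe_pow, Polynomial.coe_X]
      have hc : ∀ k ∈ Finset.range m,
          ((Polynomial.C (b m k) * Polynomial.X ^ (m - k) * p (k + 1) : Polynomial ℤ) : PowerSeries ℤ)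
            = PowerSeries.C (b m k) * PowerSeries.X^(m-k) * (p (k+1) : PowerSeries ℤ) := by
        intro k _
        rw [Polynomial.coe_mul, Polynomial.coe_mul, Polynomial.coe_C, Polynomial.coe_pow,
          Polynomial.coe_X]
      have hc' : ∀ k ∈ Finset.range m,
          ((Polynomial.C (b m k) * Polynomial.X ^ (m - k) * q (k + 1) : Polynomial ℤ) : PowerSeries ℤ)
            = PowerSeries.C (b m k) * PowerSeries.X^(m-k) * (q (k+1) : PowerSeries ℤ) := by
        intro k _
        rw [Polynomial.coe_mul, Polynomial.coe_mul, Polynomial.coe_C, Polynomial.coe_pow,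
          Polynomial.coe_X]
      rw [Finset.sum_congr rfl hc, Finset.sum_congr rfl hc']
      ring
end

section
/- Let d ≥ 1, let R = ℤ[x₁, …, x_d, z] be a polynomial ring (and set x₀ = 1 ∈ R), and let b_{m,k} ∈ ℤ be given for 1 ≤ m ≤ d and 0 ≤ k ≤ m. Define r₁ = 1 and, recursively for 1 ≤ m ≤ d, r_{m+1} = r_m + x_m z^m − Σ_{k=0}^{m−1} b_{m,k} z^{m−k} r_{k+1}. Then for every 1 ≤ m ≤ d + 1, r_m = Σ_{i=0}^{m−1} Σ_{j=0}^{i} c^{(m)}_{i,j} x_j z^i, where c^{(m)}_{i,j} is the sum over all n ≥ 0 and all integer chains j ≤ s₁ < t₁ ≤ s₂ < t₂ ≤ ⋯ ≤ s_n < t_n ≤ m − 1 with (t₁ − s₁) + ⋯ + (t_n − s_n) = i − j of (−1)ⁿ b_{t₁,s₁} b_{t₂,s₂} ⋯ b_{t_n,s_n} (the empty chain n = 0 occurs exactly when i = j and contributes 1, so c^{(m)}_{i,i} = 1). -/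
/-- The ambient polynomial ring `ℤ[x₁, x₂, …, z]`: the variable `Sum.inl j` is `x_j`
and `Sum.inr ()` is `z` (only `x₁, …, x_d` and `z` actually occur). -/
abbrev PolyRing := MvPolynomial (ℕ ⊕ Unit) ℤ

/-- `x_j`, with the convention `x₀ = 1`. -/
noncomputable def xvar (j : ℕ) : PolyRing :=
  if j = 0 then 1 else MvPolynomial.X (Sum.inl j)

/-- The variable `z`. -/
noncomputable def zvar : PolyRing := MvPolynomial.X (Sum.inr ())

/-- A chain `j ≤ s₁ < t₁ ≤ s₂ < t₂ ≤ ⋯ ≤ s_n < t_n ≤ top` with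
`(t₁ − s₁) + ⋯ + (t_n − s_n) = i − j`, encoded as the list of pairs `(s, t)`. -/
def IsBChain (j top i : ℕ) (L : List (ℕ × ℕ)) : Prop :=
  (∀ p ∈ L, p.1 < p.2) ∧ List.Chain' (fun p q => p.2 ≤ q.1) L ∧
  (∀ p ∈ L, j ≤ p.1 ∧ p.2 ≤ top) ∧
  (L.map fun p => p.2 - p.1).sum + j = i

/-- The coefficient `c^{(m)}_{i,j}`: the sum over all chains in `[j, m − 1]` of total
increment `i − j` of `(−1)ⁿ b_{t₁,s₁} ⋯ b_{t_n,s_n}`. -/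
noncomputable def ccoef (b : ℕ → ℕ → ℤ) (m i j : ℕ) : ℤ :=
  ∑ᶠ (L : List (ℕ × ℕ)) (_ : IsBChain j (m - 1) i L),
    (-1) ^ L.length * (L.map fun p => b p.2 p.1).prod

namespace BC

/-- length of a chain is at most total increment -/
lemma len_le (L : List (ℕ × ℕ)) (h1 : ∀ p ∈ L, p.1 < p.2) :
    L.length ≤ (L.map fun p => p.2 - p.1).sum := by
  induction L with
  | nil => simp
  | cons a l ih =>
    simp only [List.map_cons, List.sum_cons, List.length_cons]
    have ha := h1 a (by simp)
    have := ih (fun p hp => h1 p (by simp [hp]))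
    omega

lemma chains_finite (j top i : ℕ) : {L : List (ℕ × ℕ) | IsBChain j top i L}.Finite := by
  have hsub : {L : List (ℕ × ℕ) | IsBChain j top i L} ⊆
      (List.map (fun p : Fin (top+1) × Fin (top+1) => ((p.1 : ℕ), (p.2 : ℕ)))) ''
        {l | l.length ≤ i} := by
    intro L hL
    obtain ⟨h1, h2, h3, h4⟩ := hL
    refine ⟨L.attach.map (fun q =>
      (⟨q.1.1, by have := (h3 q.1 q.2).2; have := h1 q.1 q.2; omega⟩,
       ⟨q.1.2, by have := (h3 q.1 q.2).2; omega⟩)), ?_, ?_⟩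
    · simp only [Set.mem_setOf_eq, List.length_map, List.length_attach]
      have := len_le L h1
      omega
    · rw [List.map_map]
      have : (fun p : Fin (top+1) × Fin (top+1) => ((p.1 : ℕ), (p.2 : ℕ))) ∘
          (fun q : {x // x ∈ L} =>
            ((⟨q.1.1, by have := (h3 q.1 q.2).2; have := h1 q.1 q.2; omega⟩ : Fin (top+1)),
             (⟨q.1.2, by have := (h3 q.1 q.2).2; omega⟩ : Fin (top+1))))
          = fun q : {x // x ∈ L} => q.1 := by
        funext q; rfl
      rw [this]; exact List.attach_map_subtype_val L
  exact ((List.finite_length_le _ i).image _).subset hsub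

noncomputable def cset (j top i : ℕ) : Finset (List (ℕ × ℕ)) := (chains_finite j top i).toFinset

lemma mem_cset {j top i : ℕ} {L : List (ℕ × ℕ)} : L ∈ cset j top i ↔ IsBChain j top i L := by
  simp [cset, Set.Finite.mem_toFinset]

lemma ccoef_eq_sum (b : ℕ → ℕ → ℤ) (m i j : ℕ) :
    ccoef b m i j = ∑ L ∈ cset j (m-1) i, (-1) ^ L.length * (L.map fun p => b p.2 p.1).prod := by
  have h : ccoef b m i j = ∑ᶠ L ∈ {L | IsBChain j (m-1) i L},
      ((-1:ℤ)) ^ L.length * (L.map fun p => b p.2 p.1).prod := rfl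
  rw [h, finsum_mem_eq_finite_toFinset_sum _ (chains_finite j (m-1) i)]
  rfl



lemma cset_diag (j top : ℕ) : cset j top j = {[]} := by
  ext L
  simp only [mem_cset, Finset.mem_singleton]
  constructor
  · rintro ⟨h1, h2, h3, h4⟩
    cases L with
    | nil => rfl
    | cons a l =>
      exfalso
      have ha := h1 a (by simp)
      simp only [List.map_cons, List.sum_cons] at h4
      omega
  · rintro rfl
    exact ⟨by simp, List.isChain_nil, by simp, by simp⟩

lemma ccoef_diag (b : ℕ → ℕ → ℤ) (m i : ℕ) : ccoef b m i i = 1 := by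
  rw [ccoef_eq_sum, cset_diag]
  simp

lemma ccoef_zero_of_lt (b : ℕ → ℕ → ℤ) (m i j : ℕ) (h : i < j) : ccoef b m i j = 0 := by
  rw [ccoef_eq_sum]
  have : cset j (m-1) i = ∅ := by
    ext L
    simp only [mem_cset, Finset.notMem_empty, iff_false]
    rintro ⟨h1, h2, h3, h4⟩
    omega
  simp [this]

/-- total increment of a nonempty chain is bounded by top - head.1 -/
lemma sum_bound {top : ℕ} : ∀ (L : List (ℕ × ℕ)) (a : ℕ × ℕ),
    (∀ p ∈ a :: L, p.1 < p.2) → List.Chain' (fun p q => p.2 ≤ q.1) (a :: L) →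
    (∀ p ∈ a :: L, p.2 ≤ top) →
    ((a :: L).map fun p => p.2 - p.1).sum + a.1 ≤ top
  | [], a, h1, h2, h3 => by
    have := h1 a (by simp); have := h3 a (by simp)
    simp only [List.map_cons, List.map_nil, List.sum_cons, List.sum_nil]
    omega
  | q :: l, a, h1, h2, h3 => by
    have ih := sum_bound l q (fun p hp => h1 p (by simp_all)) (List.isChain_cons_cons.mp h2).2
      (fun p hp => h3 p (by simp_all))
    have haq : a.2 ≤ q.1 := (List.isChain_cons_cons.mp h2).1
    have ha := h1 a (by simp)
    simp only [List.map_cons, List.sum_cons] at ih ⊢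
    omega

lemma ccoef_zero_of_top_lt (b : ℕ → ℕ → ℤ) (m i j : ℕ) (hj : j < i) (htop : m - 1 < i) :
    ccoef b m i j = 0 := by
  rw [ccoef_eq_sum]
  have : cset j (m-1) i = ∅ := by
    ext L
    simp only [mem_cset, Finset.notMem_empty, iff_false]
    rintro ⟨h1, h2, h3, h4⟩
    cases L with
    | nil => simp at h4; omega
    | cons a l =>
      have := sum_bound l a h1 h2 (fun p hp => (h3 p hp).2)
      have := (h3 a (by simp)).1
      omega
  simp [this]

lemma chain_pairwise : ∀ (L : List (ℕ × ℕ)), (∀ p ∈ L, p.1 < p.2) →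
    List.Chain' (fun p q => p.2 ≤ q.1) L → List.Pairwise (fun p q : ℕ × ℕ => p.2 ≤ q.1) L
  | [], _, _ => List.Pairwise.nil
  | [a], _, _ => by simp
  | a :: q :: l, h1, h2 => by
    have hc := List.isChain_cons_cons.mp h2
    have ih := chain_pairwise (q :: l) (fun p hp => h1 p (by simp_all)) hc.2
    refine List.pairwise_cons.mpr ⟨?_, ih⟩
    intro p hp
    rcases List.mem_cons.mp hp with rfl | hp
    · exact hc.1
    · have hq := h1 q (by simp)
      have := (List.pairwise_cons.mp ih).1 p hp
      omega



lemma eq_nil_or_append' (L : List (ℕ × ℕ)) : L = [] ∨ ∃ L' a, L = L' ++ [a] := by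
  rcases List.eq_nil_or_concat L with h | ⟨L', a, h⟩
  · exact Or.inl h
  · exact Or.inr ⟨L', a, by simpa [List.concat_eq_append] using h⟩

lemma ccoef_rec (b : ℕ → ℕ → ℤ) {m : ℕ} (hm : 1 ≤ m) (i j : ℕ) :
    ccoef b (m+1) i j = ccoef b m i j -
      ∑ k ∈ Finset.range m, ∑ i' ∈ Finset.range (k+1),
        (if i' + (m-k) = i then b m k * ccoef b (k+1) i' j else 0) := by
  classical
  set f : List (ℕ × ℕ) → ℤ := fun L => (-1) ^ L.length * (L.map fun p => b p.2 p.1).prod with hf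
  have key : ∀ m' i' j', ccoef b m' i' j' = ∑ L ∈ cset j' (m'-1) i', f L :=
    fun m' i' j' => ccoef_eq_sum b m' i' j'
  rw [key, key, Nat.add_sub_cancel]
  set Q : List (ℕ × ℕ) → Prop := fun L => L ≠ [] ∧ (L.getLastD (0,0)).2 = m with hQ
  rw [← Finset.sum_filter_add_sum_filter_not (cset j m i) Q f]
  have stepA : (cset j m i).filter (fun L => ¬ Q L) = cset j (m-1) i := by
    ext L
    simp only [Finset.mem_filter, mem_cset]
    constructor
    · rintro ⟨⟨h1, h2, h3, h4⟩, hnq⟩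
      rcases eq_nil_or_append' L with rfl | ⟨L', a, rfl⟩
      · exact ⟨h1, h2, by simp, h4⟩
      · have hne : L' ++ [a] ≠ [] := by simp
        have hlast : ((L' ++ [a]).getLastD (0,0)) = a := List.getLastD_concat
        have ham : a.2 ≠ m := by
          intro h; exact hnq ⟨hne, by rw [hlast, h]⟩
        have ham' : a.2 ≤ m - 1 := by
          have := (h3 a (by simp)).2; omega
        refine ⟨h1, h2, ?_, h4⟩
        intro p hp
        rcases List.mem_append.mp hp with hp' | hp'
        · have hpw := chain_pairwise _ h1 h2
          have h5 := (List.pairwise_append.mp hpw).2.2 p hp' a (by simp)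
          have h6 := h1 a (by simp)
          exact ⟨(h3 p hp).1, by omega⟩
        · simp only [List.mem_singleton] at hp'; subst hp'
          exact ⟨(h3 p hp).1, ham'⟩
    · rintro ⟨h1, h2, h3, h4⟩
      refine ⟨⟨h1, h2, fun p hp => ⟨(h3 p hp).1, le_trans (h3 p hp).2 (by omega)⟩, h4⟩, ?_⟩
      rintro ⟨hne, hlst⟩
      have hmem : (L.getLastD (0,0)) ∈ L := by
        rcases eq_nil_or_append' L with rfl | ⟨L', a, rfl⟩
        · exact absurd rfl hne
        · rw [List.getLastD_concat]; simp
      have := (h3 _ hmem).2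
      omega
  set P : Finset (ℕ × ℕ) := (Finset.range m ×ˢ Finset.range m).filter
      (fun q => q.2 ≤ q.1 ∧ q.2 + (m - q.1) = i) with hP
  have claim1 : ∑ k ∈ Finset.range m, ∑ i' ∈ Finset.range (k+1),
        (if i' + (m-k) = i then b m k * ccoef b (k+1) i' j else 0)
      = ∑ q ∈ P, b m q.1 * ccoef b (q.1+1) q.2 j := by
    rw [hP, Finset.sum_filter, Finset.sum_product]
    refine Finset.sum_congr rfl (fun k hk => ?_)
    have hkm : k < m := Finset.mem_range.mp hk
    rw [← Finset.sum_filter, ← Finset.sum_filter]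
    apply Finset.sum_congr _ (fun _ _ => rfl)
    ext i'
    simp only [Finset.mem_filter, Finset.mem_range]
    omega
  have claim2 : ∑ q ∈ P, b m q.1 * ccoef b (q.1+1) q.2 j
      = ∑ x ∈ P.sigma (fun q => cset j q.1 q.2), b m x.1.1 * f x.2 := by
    rw [Finset.sum_sigma]
    refine Finset.sum_congr rfl (fun q hq => ?_)
    rw [key, Nat.add_sub_cancel, Finset.mul_sum]
  have claim3 : ∑ L ∈ (cset j m i).filter Q, f L
      = ∑ x ∈ P.sigma (fun q => cset j q.1 q.2), -(b m x.1.1 * f x.2) := by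
    refine Finset.sum_bij'
      (fun L _ => (⟨(((L.getLastD (0,0)).1 : ℕ), (L.dropLast.map fun p => p.2 - p.1).sum + j),
          L.dropLast⟩ : (_ : ℕ × ℕ) × List (ℕ × ℕ)))
      (fun x _ => x.2 ++ [(x.1.1, m)]) ?_ ?_ ?_ ?_ ?_
    · -- forward membership
      rintro L hL
      obtain ⟨hc, hne, hlst⟩ := Finset.mem_filter.mp hL
      rw [mem_cset] at hc
      obtain ⟨h1, h2, h3, h4⟩ := hc
      rcases eq_nil_or_append' L with rfl | ⟨L', a, rfl⟩
      · exact absurd rfl hne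
      · rw [List.getLastD_concat] at hlst ⊢
        rw [List.dropLast_concat]
        have hpw := chain_pairwise _ h1 h2
        have hub : ∀ p ∈ L', p.2 ≤ a.1 :=
          fun p hp => (List.pairwise_append.mp hpw).2.2 p hp a (by simp)
        have ha1 := h1 a (by simp)
        have ha3 := h3 a (by simp)
        have hsum : (L'.map fun p => p.2 - p.1).sum + (a.2 - a.1) + j = i := by
          simp only [List.map_append, List.sum_append, List.map_cons, List.map_nil,
            List.sum_cons, List.sum_nil] at h4
          omega
        have hle : (L'.map fun p => p.2 - p.1).sum + j ≤ a.1 := by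
          rcases L' with _ | ⟨q, l⟩
          · simpa using (h3 a (by simp)).1
          · have hsb := sum_bound (top := a.1) l q
              (fun p hp => h1 p (by simp only [List.mem_cons, List.mem_append] at hp ⊢; tauto))
              ((List.isChain_append.mp h2).1) (fun p hp => hub p hp)
            have hjq := (h3 q (by simp)).1
            simp only [List.map_cons, List.sum_cons] at hsb ⊢
            omega
        refine Finset.mem_sigma.mpr ⟨?_, ?_⟩
        · simp only [hP, Finset.mem_filter, Finset.mem_product, Finset.mem_range]
          refine ⟨⟨by omega, by omega⟩, by omega, by omega⟩
        · rw [mem_cset]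
          refine ⟨fun p hp => h1 p (by simp [hp]), (List.isChain_append.mp h2).1,
            fun p hp => ⟨(h3 p (by simp [hp])).1, hub p hp⟩, rfl⟩
    · -- backward membership
      rintro ⟨⟨k, i'⟩, L'⟩ hx
      obtain ⟨hq, hL'⟩ := Finset.mem_sigma.mp hx
      dsimp only at hq hL' ⊢
      simp only [hP, Finset.mem_filter, Finset.mem_product, Finset.mem_range] at hq
      obtain ⟨⟨hkm, him⟩, hik, hii⟩ := hq
      rw [mem_cset] at hL'
      obtain ⟨h1, h2, h3, h4⟩ := hL'
      have hjk : j ≤ k := by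
        rcases L' with _ | ⟨q, l⟩
        · simp only [List.map_nil, List.sum_nil, Nat.zero_add] at h4; omega
        · have := (h3 q (by simp)).1
          have := h1 q (by simp)
          have := (h3 q (by simp)).2
          omega
      refine Finset.mem_filter.mpr ⟨mem_cset.mpr ⟨?_, ?_, ?_, ?_⟩, ?_, ?_⟩
      · intro p hp
        rcases List.mem_append.mp hp with hp' | hp'
        · exact h1 p hp'
        · simp only [List.mem_singleton] at hp'; subst hp'; exact hkm
      · refine List.isChain_append.mpr ?_
        refine ⟨h2, List.isChain_singleton _, ?_⟩
        intro x hx' y hy'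
        simp only [List.head?_cons, Option.mem_def, Option.some.injEq] at hy'
        subst hy'
        exact (h3 x (List.mem_of_mem_getLast? hx')).2
      · intro p hp
        rcases List.mem_append.mp hp with hp' | hp'
        · exact ⟨(h3 p hp').1, le_trans (h3 p hp').2 (by omega)⟩
        · simp only [List.mem_singleton] at hp'; subst hp'
          exact ⟨hjk, le_refl m⟩
      · simp only [List.map_append, List.sum_append, List.map_cons, List.map_nil,
          List.sum_cons, List.sum_nil]
        omega
      · simp
      · rw [List.getLastD_concat]
    · -- left inverse
      rintro L hL
      obtain ⟨hc, hne, hlst⟩ := Finset.mem_filter.mp hL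
      rw [mem_cset] at hc
      obtain ⟨h1, h2, h3, h4⟩ := hc
      rcases eq_nil_or_append' L with rfl | ⟨L', a, rfl⟩
      · exact absurd rfl hne
      · simp only [List.dropLast_concat, List.getLastD_concat] at hlst ⊢
        rw [← hlst]
    · -- right inverse
      rintro ⟨⟨k, i'⟩, L'⟩ hx
      obtain ⟨hq, hL'⟩ := Finset.mem_sigma.mp hx
      dsimp only at hq hL' ⊢
      rw [mem_cset] at hL'
      obtain ⟨h1, h2, h3, h4⟩ := hL'
      simp only [List.dropLast_concat, List.getLastD_concat]
      have : (L'.map fun p => p.2 - p.1).sum + j = i' := h4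
      simp [this]
    · -- value equation
      rintro L hL
      obtain ⟨hc, hne, hlst⟩ := Finset.mem_filter.mp hL
      rcases eq_nil_or_append' L with rfl | ⟨L', a, rfl⟩
      · exact absurd rfl hne
      · simp only [List.dropLast_concat, List.getLastD_concat] at hlst ⊢
        simp only [hf, List.length_append, List.length_cons, List.length_nil,
          List.map_append, List.prod_append, List.map_cons, List.map_nil,
          List.prod_cons, List.prod_nil, hlst]
        ring
  rw [stepA, claim3, claim1, claim2, Finset.sum_neg_distrib]
  ring

open Finset MvPolynomial in
lemma rect (c : ℕ → ℕ → ℤ) (hc : ∀ i j, i < j → c i j = 0) (M N : ℕ) (hMN : M ≤ N) :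
    ∑ i ∈ Finset.range M, ∑ j ∈ Finset.range (i+1), MvPolynomial.C (c i j) * xvar j * zvar ^ i
    = ∑ i ∈ Finset.range M, ∑ j ∈ Finset.range N, MvPolynomial.C (c i j) * xvar j * zvar ^ i := by
  refine Finset.sum_congr rfl fun i hi => ?_
  refine Finset.sum_subset ?_ ?_
  · exact Finset.range_subset_range.mpr (by have := Finset.mem_range.mp hi; omega)
  · intro j hj hj'
    have hij : i < j := by
      simp only [Finset.mem_range] at hj hj'; omega
    rw [hc i j hij]; simp

end BC

theorem stmt16 (d : ℕ) (hd : 1 ≤ d) (b : ℕ → ℕ → ℤ)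
    (r : ℕ → PolyRing) (hr1 : r 1 = 1)
    (hrec : ∀ m, 1 ≤ m → m ≤ d →
      r (m + 1) = r m + xvar m * zvar ^ m
        - ∑ k ∈ Finset.range m, MvPolynomial.C (b m k) * zvar ^ (m - k) * r (k + 1)) :
    ∀ m, 1 ≤ m → m ≤ d + 1 →
      r m = ∑ i ∈ Finset.range m, ∑ j ∈ Finset.range (i + 1),
        MvPolynomial.C (ccoef b m i j) * xvar j * zvar ^ i := by
  intro m
  induction m using Nat.strong_induction_on with
  | _ m IH =>
  intro hm1 hmd
  obtain _ | n := m
  · omega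
  obtain _ | N := n
  · -- base case m = 1
    rw [hr1]
    simp [Finset.sum_range_one, BC.ccoef_diag, xvar]
  · -- step case m = N + 2; write as (N+1) + 1
    set M := N + 1 with hM
    have hM1 : 1 ≤ M := by omega
    have hMd : M ≤ d := by omega
    have hrN : r M = ∑ i ∈ Finset.range M, ∑ j ∈ Finset.range (i + 1),
        MvPolynomial.C (ccoef b M i j) * xvar j * zvar ^ i :=
      IH M (by omega) (by omega) (by omega)
    have hrk : ∀ k ∈ Finset.range M,
        MvPolynomial.C (b M k) * zvar ^ (M - k) * r (k + 1)
        = MvPolynomial.C (b M k) * zvar ^ (M - k) *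
          ∑ i ∈ Finset.range (k+1), ∑ j ∈ Finset.range (i + 1),
            MvPolynomial.C (ccoef b (k+1) i j) * xvar j * zvar ^ i := by
      intro k hk
      rw [IH (k+1) (by simp at hk; omega) (by omega) (by simp at hk; omega)]
    have hstep := hrec M hM1 hMd
    rw [Finset.sum_congr rfl hrk, hrN] at hstep
    rw [hstep]
    -- now pure algebra
    have E1 : ∑ i ∈ Finset.range (M+1), ∑ j ∈ Finset.range (i + 1),
          MvPolynomial.C (ccoef b (M+1) i j) * xvar j * zvar ^ i
        = ∑ i ∈ Finset.range (M+1), ∑ j ∈ Finset.range (M+1),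
          MvPolynomial.C (ccoef b (M+1) i j) * xvar j * zvar ^ i :=
      BC.rect _ (fun i j h => BC.ccoef_zero_of_lt b _ i j h) (M+1) (M+1) le_rfl
    have E2 : ∑ i ∈ Finset.range (M+1), ∑ j ∈ Finset.range (M+1),
          MvPolynomial.C (ccoef b M i j) * xvar j * zvar ^ i
        = (∑ i ∈ Finset.range M, ∑ j ∈ Finset.range (i + 1),
            MvPolynomial.C (ccoef b M i j) * xvar j * zvar ^ i) + xvar M * zvar ^ M := by
      rw [Finset.sum_range_succ]
      congr 1
      · exact (BC.rect _ (fun i j h => BC.ccoef_zero_of_lt b _ i j h) M (M+1) (by omega)).symm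
      · rw [Finset.sum_range_succ]
        have hz : ∑ j ∈ Finset.range M, MvPolynomial.C (ccoef b M M j) * xvar j * zvar ^ M
            = 0 := by
          refine Finset.sum_eq_zero fun j hj => ?_
          rw [BC.ccoef_zero_of_top_lt b M M j (Finset.mem_range.mp hj) (by omega)]
          simp
        rw [hz, BC.ccoef_diag]
        simp
    have E3 : ∑ i ∈ Finset.range (M+1), ∑ j ∈ Finset.range (M+1),
          MvPolynomial.C (∑ k ∈ Finset.range M, ∑ i' ∈ Finset.range (k+1),
            if i' + (M-k) = i then b M k * ccoef b (k+1) i' j else 0) * xvar j * zvar ^ i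
        = ∑ k ∈ Finset.range M, MvPolynomial.C (b M k) * zvar ^ (M - k) *
            ∑ i ∈ Finset.range (k+1), ∑ j ∈ Finset.range (i + 1),
              MvPolynomial.C (ccoef b (k+1) i j) * xvar j * zvar ^ i := by
      have rhs2 : ∀ k ∈ Finset.range M,
          MvPolynomial.C (b M k) * zvar ^ (M - k) *
            ∑ i ∈ Finset.range (k+1), ∑ j ∈ Finset.range (i + 1),
              MvPolynomial.C (ccoef b (k+1) i j) * xvar j * zvar ^ i
          = ∑ i' ∈ Finset.range (k+1), ∑ j ∈ Finset.range (M+1),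
              MvPolynomial.C (b M k * ccoef b (k+1) i' j) * xvar j * zvar ^ (i' + (M - k)) := by
        intro k hk
        have hkM := Finset.mem_range.mp hk
        rw [BC.rect _ (fun i j h => BC.ccoef_zero_of_lt b _ i j h) (k+1) (M+1) (by omega)]
        rw [Finset.mul_sum]
        refine Finset.sum_congr rfl fun i' _ => ?_
        rw [Finset.mul_sum]
        refine Finset.sum_congr rfl fun j _ => ?_
        rw [pow_add, map_mul]
        ring
      rw [Finset.sum_congr rfl rhs2]
      simp only [map_sum, Finset.sum_mul, apply_ite (MvPolynomial.C (R := ℤ) (σ := ℕ ⊕ Unit)),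
        map_zero, ite_mul, zero_mul]
      -- reorder sums
      calc ∑ i ∈ Finset.range (M+1), ∑ j ∈ Finset.range (M+1), ∑ k ∈ Finset.range M,
              ∑ i' ∈ Finset.range (k+1),
              (if i' + (M-k) = i then MvPolynomial.C (b M k * ccoef b (k+1) i' j) * xvar j * zvar ^ i else 0)
          = ∑ i ∈ Finset.range (M+1), ∑ k ∈ Finset.range M, ∑ j ∈ Finset.range (M+1),
              ∑ i' ∈ Finset.range (k+1),
              (if i' + (M-k) = i then MvPolynomial.C (b M k * ccoef b (k+1) i' j) * xvar j * zvar ^ i else 0) :=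
            Finset.sum_congr rfl fun i _ => Finset.sum_comm
        _ = ∑ k ∈ Finset.range M, ∑ i ∈ Finset.range (M+1), ∑ j ∈ Finset.range (M+1),
              ∑ i' ∈ Finset.range (k+1),
              (if i' + (M-k) = i then MvPolynomial.C (b M k * ccoef b (k+1) i' j) * xvar j * zvar ^ i else 0) :=
            Finset.sum_comm
        _ = ∑ k ∈ Finset.range M, ∑ i ∈ Finset.range (M+1), ∑ i' ∈ Finset.range (k+1),
              ∑ j ∈ Finset.range (M+1),
              (if i' + (M-k) = i then MvPolynomial.C (b M k * ccoef b (k+1) i' j) * xvar j * zvar ^ i else 0) :=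
            Finset.sum_congr rfl fun k _ => Finset.sum_congr rfl fun i _ => Finset.sum_comm
        _ = ∑ k ∈ Finset.range M, ∑ i' ∈ Finset.range (k+1), ∑ i ∈ Finset.range (M+1),
              ∑ j ∈ Finset.range (M+1),
              (if i' + (M-k) = i then MvPolynomial.C (b M k * ccoef b (k+1) i' j) * xvar j * zvar ^ i else 0) :=
            Finset.sum_congr rfl fun k _ => Finset.sum_comm
        _ = ∑ k ∈ Finset.range M, ∑ i' ∈ Finset.range (k+1), ∑ j ∈ Finset.range (M+1),
              ∑ i ∈ Finset.range (M+1),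
              (if i' + (M-k) = i then MvPolynomial.C (b M k * ccoef b (k+1) i' j) * xvar j * zvar ^ i else 0) :=
            Finset.sum_congr rfl fun k _ => Finset.sum_congr rfl fun i' _ => Finset.sum_comm
        _ = ∑ k ∈ Finset.range M, ∑ i' ∈ Finset.range (k+1), ∑ j ∈ Finset.range (M+1),
              MvPolynomial.C (b M k * ccoef b (k+1) i' j) * xvar j * zvar ^ (i' + (M - k)) := by
            refine Finset.sum_congr rfl fun k hk => Finset.sum_congr rfl fun i' hi' =>
              Finset.sum_congr rfl fun j _ => ?_
            have hkM := Finset.mem_range.mp hk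
            have hik := Finset.mem_range.mp hi'
            rw [Finset.sum_ite_eq (Finset.range (M+1)) (i' + (M-k))
              (fun i => MvPolynomial.C (b M k * ccoef b (k+1) i' j) * xvar j * zvar ^ i)]
            rw [if_pos (Finset.mem_range.mpr (by omega))]
    have key : ∑ i ∈ Finset.range (M+1), ∑ j ∈ Finset.range (i + 1),
          MvPolynomial.C (ccoef b (M+1) i j) * xvar j * zvar ^ i
        = ((∑ i ∈ Finset.range M, ∑ j ∈ Finset.range (i + 1),
            MvPolynomial.C (ccoef b M i j) * xvar j * zvar ^ i) + xvar M * zvar ^ M)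
          - ∑ k ∈ Finset.range M, MvPolynomial.C (b M k) * zvar ^ (M - k) *
              ∑ i ∈ Finset.range (k+1), ∑ j ∈ Finset.range (i + 1),
                MvPolynomial.C (ccoef b (k+1) i j) * xvar j * zvar ^ i := by
      rw [E1]
      have split : ∀ i ∈ Finset.range (M+1), ∀ j ∈ Finset.range (M+1),
          MvPolynomial.C (ccoef b (M+1) i j) * xvar j * zvar ^ i
          = MvPolynomial.C (ccoef b M i j) * xvar j * zvar ^ i
            - MvPolynomial.C (∑ k ∈ Finset.range M, ∑ i' ∈ Finset.range (k+1),
                if i' + (M-k) = i then b M k * ccoef b (k+1) i' j else 0) * xvar j * zvar ^ i := by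
        intro i _ j _
        rw [BC.ccoef_rec b hM1 i j, map_sub, sub_mul, sub_mul]
      rw [Finset.sum_congr rfl (fun i hi => Finset.sum_congr rfl (fun j hj => split i hi j hj))]
      simp only [Finset.sum_sub_distrib]
      rw [E2, E3]
    rw [key]
end
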